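/- Let H° = {z ∈ (ℂ*)^{n+1} : z_1 + ... + z_{n+1} + 1 = 0}. Then the primitive complex Σ_n (the corner locus of max{0, x_1, ..., x_{n+1}}) is contained in the amoeba Log(H°). -/

import Mathlib

/-- Greedy signs lemma: given nonnegative reals bounded by `M`, one can choose signs
`±1` so that the signed sum has absolute value at most `M`. -/
lemma signs_lemma {ι : Type*} [DecidableEq ι] (s : Finset ι) (r : ι → ℝ) (M : ℝ)
    (hM : 0 ≤ M) (hr : ∀ k ∈ s, 0 ≤ r k ∧ r k ≤ M) :
    ∃ ε : ι → ℝ, (∀ k ∈ s, ε k = 1 ∨ ε k = -1) ∧ |∑ k ∈ s, ε k * r k| ≤ M := by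
  classical
  induction s using Finset.induction_on with
  | empty => exact ⟨fun _ => 1, by simp, by simpa using hM⟩
  | @insert a s ha ih =>
    obtain ⟨ε, hε, ht⟩ := ih (fun k hk => hr k (Finset.mem_insert_of_mem hk))
    set t := ∑ k ∈ s, ε k * r k with htdef
    obtain ⟨hra0, hraM⟩ := hr a (Finset.mem_insert_self a s)
    by_cases htpos : 0 ≤ t
    · refine ⟨Function.update ε a (-1), ?_, ?_⟩
      · intro k hk
        rcases Finset.mem_insert.1 hk with rfl | hk
        · simp
        · rw [Function.update_of_ne (ne_of_mem_of_not_mem hk ha)]; exact hε k hk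
      · rw [Finset.sum_insert ha, Function.update_self]
        have : ∑ k ∈ s, Function.update ε a (-1) k * r k = t := by
          rw [htdef]
          exact Finset.sum_congr rfl fun k hk => by
            rw [Function.update_of_ne (ne_of_mem_of_not_mem hk ha)]
        rw [this]
        rw [abs_le] at ht ⊢
        constructor <;> nlinarith [ht.1, ht.2]
    · refine ⟨Function.update ε a 1, ?_, ?_⟩
      · intro k hk
        rcases Finset.mem_insert.1 hk with rfl | hk
        · simp
        · rw [Function.update_of_ne (ne_of_mem_of_not_mem hk ha)]; exact hε k hk
      · rw [Finset.sum_insert ha, Function.update_self]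
        have : ∑ k ∈ s, Function.update ε a 1 k * r k = t := by
          rw [htdef]
          exact Finset.sum_congr rfl fun k hk => by
            rw [Function.update_of_ne (ne_of_mem_of_not_mem hk ha)]
        rw [this]
        rw [abs_le] at ht ⊢
        constructor <;> nlinarith [ht.1, ht.2]

theorem stmt_16 (n : ℕ) :
    {x : Fin (n + 1) → ℝ | ∃ i j : Fin (n + 2), i ≠ j ∧
        (Fin.cases (motive := fun _ => ℝ) (0 : ℝ) x i
          = Finset.univ.sup' Finset.univ_nonempty (fun k : Fin (n + 2) => Fin.cases (motive := fun _ => ℝ) (0 : ℝ) x k)) ∧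
        (Fin.cases (motive := fun _ => ℝ) (0 : ℝ) x j
          = Finset.univ.sup' Finset.univ_nonempty (fun k : Fin (n + 2) => Fin.cases (motive := fun _ => ℝ) (0 : ℝ) x k))}
      ⊆ (fun z : Fin (n + 1) → ℂ => fun i => Real.log ‖z i‖) ''
          {z : Fin (n + 1) → ℂ | (∀ i, z i ≠ 0) ∧ (∑ i, z i) + 1 = 0} := by
  classical
  rintro x ⟨i, j, hij, hi, hj⟩
  set f : Fin (n + 2) → ℝ := Fin.cases (motive := fun _ => ℝ) (0 : ℝ) x with hf
  set M : ℝ := Finset.univ.sup' Finset.univ_nonempty f with hM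
  have hfM : ∀ k, f k ≤ M := fun k => Finset.le_sup' f (Finset.mem_univ k)
  set Mr : ℝ := Real.exp M with hMr
  have hMrpos : 0 < Mr := Real.exp_pos M
  -- signs on the remaining indices
  set s : Finset (Fin (n + 2)) := Finset.univ \ {i, j} with hs
  obtain ⟨ε, hε, ht⟩ := signs_lemma s (fun k => Real.exp (f k)) Mr hMrpos.le
    (fun k _ => ⟨(Real.exp_pos _).le, Real.exp_le_exp.2 (hfM k)⟩)
  set t : ℝ := ∑ k ∈ s, ε k * Real.exp (f k) with htdef
  set c : ℝ := -t / (2 * Mr) with hc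
  have hc1 : c ^ 2 ≤ 1 := by
    have ht2 : t ^ 2 ≤ Mr ^ 2 := by
      rw [abs_le] at ht; nlinarith [ht.1, ht.2]
    have hct : c * (2 * Mr) = -t := by
      rw [hc]; exact div_mul_cancel₀ (-t) (by positivity)
    have h4 : (c * (2 * Mr)) ^ 2 = t ^ 2 := by rw [hct]; ring
    nlinarith [h4, ht2, mul_pos hMrpos hMrpos]
  set s0 : ℝ := Real.sqrt (1 - c ^ 2) with hs0
  have hs0sq : s0 ^ 2 = 1 - c ^ 2 := Real.sq_sqrt (by linarith)
  -- the complex numbers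
  set u : Fin (n + 2) → ℂ := fun k =>
    if k = i then (c : ℂ) + s0 * Complex.I
    else if k = j then (c : ℂ) - s0 * Complex.I
    else (ε k : ℂ) with hu
  set w : Fin (n + 2) → ℂ := fun k => (Real.exp (f k) : ℂ) * u k with hw
  have hui : u i = (c : ℂ) + s0 * Complex.I := by
    simp only [hu, if_pos rfl]
  have huj : u j = (c : ℂ) - s0 * Complex.I := by
    simp [hu, Ne.symm hij]
  have huk : ∀ k, k ≠ i → k ≠ j → u k = (ε k : ℂ) := by
    intro k hki hkj
    simp only [hu, if_neg hki, if_neg hkj]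
  have habsu : ∀ k, ‖u k‖ = 1 := by
    intro k
    by_cases hki : k = i
    · rw [hki, hui]
      rw [show (c : ℂ) + s0 * Complex.I = Complex.mk c s0 by
        apply Complex.ext <;> simp]
      rw [Complex.norm_def, Complex.normSq_mk]
      rw [show c * c + s0 * s0 = (1 : ℝ) by nlinarith [hs0sq]]
      exact Real.sqrt_one
    · by_cases hkj : k = j
      · rw [hkj, huj]
        rw [show (c : ℂ) - s0 * Complex.I = Complex.mk c (-s0) by
          apply Complex.ext <;> simp]
        rw [Complex.norm_def, Complex.normSq_mk]
        rw [show c * c + -s0 * -s0 = (1 : ℝ) by nlinarith [hs0sq]]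
        exact Real.sqrt_one
      · have hks : k ∈ s := by
          simp [hs, Finset.mem_sdiff, hki, hkj]
        rw [huk k hki hkj]
        rcases hε k hks with h | h <;> simp [h]
  have habsw : ∀ k, ‖w k‖ = Real.exp (f k) := by
    intro k
    rw [hw]
    simp only [norm_mul, habsu k, mul_one, Complex.norm_real, Real.norm_eq_abs,
      abs_of_pos (Real.exp_pos _)]
  have hwne : ∀ k, w k ≠ 0 := by
    intro k h
    have := habsw k
    rw [h] at this
    simp at this
    exact (Real.exp_pos (f k)).ne' this.symm
  -- sum of w is zero
  have hfi : f i = M := hi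
  have hfj : f j = M := hj
  have hsumw : ∑ k, w k = 0 := by
    have hsub : ({i, j} : Finset (Fin (n + 2))) ⊆ Finset.univ := Finset.subset_univ _
    have key : ∑ k ∈ s, w k + ∑ k ∈ ({i, j} : Finset (Fin (n + 2))), w k = ∑ k, w k := by
      rw [hs]; exact Finset.sum_sdiff hsub
    have h1 : ∑ k ∈ s, w k = ((t : ℝ) : ℂ) := by
      rw [htdef, Complex.ofReal_sum]
      refine Finset.sum_congr rfl fun k hk => ?_
      have hki : k ≠ i := by
        intro h; rw [hs] at hk; simp [h] at hk
      have hkj : k ≠ j := by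
        intro h; rw [hs] at hk; simp [h] at hk
      rw [hw]
      simp only [huk k hki hkj]
      push_cast
      ring
    have h2 : ∑ k ∈ ({i, j} : Finset (Fin (n + 2))), w k = -((t : ℝ) : ℂ) := by
      rw [Finset.sum_pair hij, hw]
      simp only []
      rw [hui, huj, hfi, hfj]
      have hcc : (Real.exp M : ℂ) * (2 * (c : ℂ)) = -(t : ℝ) := by
        have : c * (2 * Mr) = -t := by rw [hc]; exact div_mul_cancel₀ (-t) (by positivity)
        rw [hMr] at this
        calc (Real.exp M : ℂ) * (2 * (c : ℂ)) = ((c * (2 * Real.exp M) : ℝ) : ℂ) := by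
              push_cast; ring
          _ = -(t : ℝ) := by rw [this]; push_cast; ring
      calc (Real.exp M : ℂ) * ((c : ℂ) + s0 * Complex.I)
            + (Real.exp M : ℂ) * ((c : ℂ) - s0 * Complex.I)
          = (Real.exp M : ℂ) * (2 * (c : ℂ)) := by ring
        _ = -((t : ℝ) : ℂ) := hcc
    rw [← key, h1, h2]; ring
  -- define z
  refine ⟨fun m => w m.succ / w 0, ⟨?_, ?_⟩, ?_⟩
  · intro m
    exact div_ne_zero (hwne m.succ) (hwne 0)
  · have : ∑ m : Fin (n + 1), w m.succ / w 0 = (∑ m : Fin (n + 1), w m.succ) / w 0 := by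
      rw [Finset.sum_div]
    rw [this]
    have hsplit : ∑ k, w k = w 0 + ∑ m : Fin (n + 1), w m.succ := Fin.sum_univ_succ w
    have hw0 : ∑ m : Fin (n + 1), w m.succ = -w 0 := by
      rw [hsplit] at hsumw; linear_combination hsumw
    rw [hw0, neg_div, div_self (hwne 0)]
    ring
  · funext m
    simp only
    have hab : ‖w m.succ / w 0‖ = Real.exp (x m) := by
      rw [norm_div, habsw, habsw]
      have h0 : f 0 = 0 := rfl
      have hsucc : f m.succ = x m := rfl
      rw [h0, hsucc, Real.exp_zero, div_one]
    rw [hab, Real.log_exp]
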